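/- Let M be a minimal edge multiway cut of (G,T) with M ≠ R, let p be the pivot of M (a designated vertex shiftable into C_{li(M)}, where li(M) is the largest index of a block admitting a shiftable vertex), and let Par(M) be the partition obtained by moving C_{P_M(p)} \ C into C_{li(M)}, where C is the component of G[C_{P_M(p)} \ {p}] containing t_{P_M(p)}. Then Par(M) is a minimal edge multiway cut of (G,T) and depth(Par(M)) < depth(M). -/

import Mathlib

open SimpleGraph Set

variable {V : Type*}

/-- `M` is an edge multiway cut of `(G, T)`: a set of edges of `G` whose removal
disconnects every pair of distinct terminals. -/
def IsEdgeMultiwayCut (G : SimpleGraph V) (T : Set V) (M : Set (Sym2 V)) : Prop :=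
  M ⊆ G.edgeSet ∧ ∀ s ∈ T, ∀ u ∈ T, s ≠ u → ¬ (G.deleteEdges M).Reachable s u

/-- `M` is a minimal edge multiway cut of `(G, T)`. -/
def IsMinEdgeMultiwayCut (G : SimpleGraph V) (T : Set V) (M : Set (Sym2 V)) : Prop :=
  IsEdgeMultiwayCut G T M ∧ ∀ M' ⊂ M, ¬ IsEdgeMultiwayCut G T M'

/-- `C` is (the vertex set of) a connected component of the graph `H`. -/
def IsComp (H : SimpleGraph V) (C : Set V) : Prop :=
  ∃ c : H.ConnectedComponent, C = c.supp

/-- `C` is (the vertex set of) a connected component of `G - M` (vertex deletion). -/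
def IsCompOf (G : SimpleGraph V) (M : Set V) (C : Set V) : Prop :=
  ∃ c : (G.induce (Mᶜ : Set V)).ConnectedComponent, C = Subtype.val '' c.supp

/-- `Cr` is the root family: `Cr i` is the connected component containing `t i` of
`G − (Cr 0 ∪ ⋯ ∪ Cr (i-1) ∪ {t (i+1), …, t (k-1)})`. -/
def IsRootFamily {k : ℕ} (G : SimpleGraph V) (t : Fin k → V) (Cr : Fin k → Set V) : Prop :=
  ∀ i, IsCompOf G ((⋃ j < i, Cr j) ∪ (t '' {j | i < j})) (Cr i) ∧ t i ∈ Cr i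

/-- The set of edges of `G` crossing between distinct blocks of the family `C`. -/
def crossEdges {k : ℕ} (G : SimpleGraph V) (C : Fin k → Set V) : Set (Sym2 V) :=
  {e | ∃ a b : V, G.Adj a b ∧ e = s(a, b) ∧ ∀ i, ¬ (a ∈ C i ∧ b ∈ C i)}

/-- Let `M ≠ R` be a minimal edge multiway cut with partition
`C₁, …, C_k`, let `li` be the largest index of a block admitting a shiftable vertex, let
`p` be the pivot of `M` (a designated vertex shiftable into `C li`, lying in `C s` with
`li < s`), and let `C₀` be the component of `G[C s \ {p}]` containing `t s`. Then the
parent partition `C2` (obtained by moving `C s \ C₀` into `C li`) yields a minimal edge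
multiway cut `Par(M)` with `depth(Par(M)) < depth(M)`. -/
theorem parent_is_minimal_and_shallower [Fintype V]
    (G : SimpleGraph V) (hconn : G.Connected)
    (k : ℕ) (hk : 0 < k) (t : Fin k → V) (ht : Function.Injective t)
    (Cr : Fin k → Set V) (hCr : IsRootFamily G t Cr)
    (M : Set (Sym2 V)) (hM : IsMinEdgeMultiwayCut G (Set.range t) M)
    (C : Fin k → Set V) (hC : ∀ i, IsComp (G.deleteEdges M) (C i) ∧ t i ∈ C i)
    (hne : M ≠ crossEdges G Cr)
    (li s : Fin k) (hls : li < s) (p : V)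
    (hpT : p ∉ Set.range t) (hps : p ∈ C s) (hpN : ∃ u ∈ C li, G.Adj p u)
    (hmax : ∀ (j j' : Fin k) (w : V), j < j' → w ∉ Set.range t → w ∈ C j' →
      (∃ u ∈ C j, G.Adj w u) → j ≤ li)
    (C₀ : Set V) (hC₀ : IsCompOf G ((C s \ {p})ᶜ) C₀ ∧ t s ∈ C₀)
    (C2 : Fin k → Set V)
    (hC2 : ∀ i, C2 i = if i = li then C li ∪ (C s \ C₀) else if i = s then C₀ else C i)
    (iM iR iP : V → Fin k)
    (hiM : ∀ v, v ∈ C (iM v)) (hiR : ∀ v, v ∈ Cr (iR v)) (hiP : ∀ v, v ∈ C2 (iP v)) :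
    IsMinEdgeMultiwayCut G (Set.range t) (crossEdges G C2) ∧
    (∑ v : V, ((iP v : ℕ) - (iR v : ℕ))) < ∑ v : V, ((iM v : ℕ) - (iR v : ℕ)) := by
  
  classical
  obtain ⟨⟨hMsub, hMsep⟩, hMmin⟩ := hM
  set M2 := crossEdges G C2 with hM2def
  -- basic component facts for C
  have hCreach : ∀ i, ∀ u ∈ C i, ∀ v ∈ C i, (G.deleteEdges M).Reachable u v := by
    intro i u hu v hv
    obtain ⟨c, hc⟩ := (hC i).1
    rw [hc, SimpleGraph.ConnectedComponent.mem_supp_iff] at hu hv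
    exact SimpleGraph.ConnectedComponent.exact (hu.trans hv.symm)
  have hCclose : ∀ i, ∀ u ∈ C i, ∀ v, (G.deleteEdges M).Reachable u v → v ∈ C i := by
    intro i u hu v hr
    obtain ⟨c, hc⟩ := (hC i).1
    rw [hc, SimpleGraph.ConnectedComponent.mem_supp_iff] at hu ⊢
    exact (SimpleGraph.ConnectedComponent.sound hr.symm).trans hu
  have hiMu : ∀ v i, v ∈ C i → iM v = i := by
    intro v i hv
    by_contra hne'
    have h1 : (G.deleteEdges M).Reachable (t (iM v)) (t i) :=
      (hCreach (iM v) (t (iM v)) (hC (iM v)).2 v (hiM v)).trans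
        (hCreach i v hv (t i) (hC i).2)
    exact hMsep _ ⟨iM v, rfl⟩ _ ⟨i, rfl⟩ (fun h => hne' (ht h)) h1
  have hUC : ∀ v i j, v ∈ C i → v ∈ C j → i = j := fun v i j hi hj =>
    (hiMu v i hi).symm.trans (hiMu v j hj)
  have htC : ∀ (q i : Fin k), t q ∈ C i → q = i := fun q i h => hUC (t q) q i (hC q).2 h
  -- C₀ facts
  have hC₀' : ∃ c : (G.induce (C s \ {p} : Set V)).ConnectedComponent,
      C₀ = Subtype.val '' c.supp := by
    have h := hC₀.1
    rwa [IsCompOf, compl_compl] at h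
  obtain ⟨c₀, hc₀⟩ := hC₀'
  have hC₀sub : C₀ ⊆ C s \ {p} := by
    rw [hc₀]; rintro _ ⟨⟨x, hx⟩, -, rfl⟩; exact hx
  have hpC₀ : p ∉ C₀ := fun h => (hC₀sub h).2 rfl
  have htsC₀ : t s ∈ C₀ := hC₀.2
  -- C2 block descriptions
  have hC2li : C2 li = C li ∪ (C s \ C₀) := by rw [hC2]; simp
  have hC2s : C2 s = C₀ := by rw [hC2]; simp [hls.ne']
  have hC2o : ∀ i, i ≠ li → i ≠ s → C2 i = C i := by
    intro i h1 h2; rw [hC2]; simp [h1, h2]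
  have hmem2 : ∀ v i, v ∈ C2 i →
      (i = li ∧ (v ∈ C li ∨ v ∈ C s \ C₀)) ∨ (i = s ∧ v ∈ C₀) ∨
        (i ≠ li ∧ i ≠ s ∧ v ∈ C i) := by
    intro v i hv
    by_cases h1 : i = li
    · subst h1; rw [hC2li, Set.mem_union] at hv; exact Or.inl ⟨rfl, hv⟩
    by_cases h2 : i = s
    · subst h2; rw [hC2s] at hv; exact Or.inr (Or.inl ⟨rfl, hv⟩)
    · rw [hC2o i h1 h2] at hv; exact Or.inr (Or.inr ⟨h1, h2, hv⟩)
  have hidx : ∀ v i, v ∈ C2 i →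
      i = (if v ∈ C₀ then s else if v ∈ C s then li else iM v) := by
    intro v i hv
    rcases hmem2 v i hv with ⟨he, hv'⟩ | ⟨he, hv'⟩ | ⟨h1, h2, hv'⟩
    · rcases hv' with h | ⟨hvs, hvC₀⟩
      · have hvCs : v ∉ C s := fun hh => (hls.ne (hUC v li s h hh)).elim
        have hvC₀ : v ∉ C₀ := fun hh => hvCs (hC₀sub hh).1
        rw [if_neg hvC₀, if_neg hvCs, he, hiMu v li h]
      · rw [if_neg hvC₀, if_pos hvs, he]
    · rw [if_pos hv', he]
    · have hvCs : v ∉ C s := fun hh => h2 (hUC v i s hv' hh)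
      have hvC₀ : v ∉ C₀ := fun hh => hvCs (hC₀sub hh).1
      rw [if_neg hvC₀, if_neg hvCs, hiMu v i hv']
  have hUC2 : ∀ v i j, v ∈ C2 i → v ∈ C2 j → i = j := fun v i j hi hj =>
    (hidx v i hi).trans (hidx v j hj).symm
  have hiPu : ∀ v i, v ∈ C2 i → iP v = i := fun v i h => hUC2 v (iP v) i (hiP v) h
  have hti2 : ∀ i, t i ∈ C2 i := by
    intro i
    by_cases h1 : i = li
    · rw [h1, hC2li]; exact Or.inl (hC li).2
    by_cases h2 : i = s
    · rw [h2, hC2s]; exact htsC₀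
    · rw [hC2o i h1 h2]; exact (hC i).2
  have htC2 : ∀ (q i : Fin k), t q ∈ C2 i → q = i := fun q i h =>
    (hiPu (t q) q (hti2 q)).symm.trans (hiPu (t q) i h)
  -- edges inside a C2-block are not in M2
  have hIntra2 : ∀ a b (i : Fin k), a ∈ C2 i → b ∈ C2 i → s(a, b) ∉ M2 := by
    intro a b i ha hb hmem
    obtain ⟨x, y, hadj, heq, hall⟩ := hmem
    rcases Sym2.eq_iff.mp heq with ⟨rfl, rfl⟩ | ⟨rfl, rfl⟩
    · exact hall i ⟨ha, hb⟩
    · exact hall i ⟨hb, ha⟩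
  -- edges inside a C-block are not in M (uses minimality of M)
  have hIntraM : ∀ a b (i : Fin k), a ∈ C i → b ∈ C i → s(a, b) ∉ M := by
    intro a b i ha hb hmem
    apply hMmin (M \ {s(a, b)})
      ((Set.sdiff_singleton_ssubset).mpr hmem)
    refine ⟨Set.diff_subset.trans hMsub, ?_⟩
    intro x hx y hy hxy hreach
    refine hMsep x hx y hy hxy ?_
    obtain ⟨w⟩ := hreach
    have key : ∀ u w', (G.deleteEdges (M \ {s(a, b)})).Walk u w' →
        (G.deleteEdges M).Reachable u w' := by
      intro u w' wk
      induction wk with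
      | nil => exact SimpleGraph.Reachable.refl _
      | @cons u' z w'' h q ih =>
        rw [SimpleGraph.deleteEdges_adj] at h
        obtain ⟨hadj', hnot⟩ := h
        by_cases hm : s(u', z) ∈ M
        · have heq : s(u', z) = s(a, b) := by
            by_contra hne2
            exact hnot ⟨hm, hne2⟩
          rcases Sym2.eq_iff.mp heq with ⟨rfl, rfl⟩ | ⟨rfl, rfl⟩
          · exact (hCreach i _ ha _ hb).trans ih
          · exact (hCreach i _ hb _ ha).trans ih
        · exact (SimpleGraph.deleteEdges_adj.mpr ⟨hadj', hm⟩).reachable.trans ih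
    exact key x y w
  -- root family facts
  have hCrsub : ∀ r : Fin k, ∀ v ∈ Cr r, v ∉ ((⋃ j < r, Cr j) ∪ (t '' {j | r < j})) := by
    intro r v hv
    obtain ⟨c, hc⟩ := (hCr r).1
    rw [hc] at hv
    obtain ⟨⟨v0, hv0⟩, -, rfl⟩ := hv
    exact hv0
  have hiRu : ∀ v i, v ∈ Cr i → iR v = i := by
    intro v i hv
    have pairwise : ∀ a b : Fin k, a < b → v ∈ Cr a → v ∈ Cr b → False := by
      intro a b hab hva hvb
      exact hCrsub b v hvb (Or.inl (Set.mem_iUnion₂.mpr ⟨a, hab, hva⟩))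
    rcases lt_trichotomy (iR v) i with h | h | h
    · exact (pairwise _ _ h (hiR v) hv).elim
    · exact h
    · exact (pairwise _ _ h hv (hiR v)).elim
  -- key step for the root lemma
  have hStep : ∀ (x y : V) (i : Fin k), G.Adj x y → iR x ≤ i →
      (∀ q, y = t q → q = i) → iR y ≤ i := by
    intro x y i hadj hxi hterm
    obtain ⟨c, hc⟩ := (hCr (iR x)).1
    have hxS : x ∈ (((⋃ j < iR x, Cr j) ∪ (t '' {j | iR x < j}))ᶜ : Set V) :=
      Set.mem_compl (hCrsub (iR x) x (hiR x))
    have hxsupp : (⟨x, hxS⟩ : _) ∈ c.supp := by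
      have hx : x ∈ Cr (iR x) := hiR x
      rw [hc] at hx
      obtain ⟨y, hy, hyx⟩ := hx
      rwa [show (⟨x, hxS⟩ : _) = y from Subtype.ext hyx.symm]
    by_cases hy : y ∈ ((⋃ j < iR x, Cr j) ∪ (t '' {j | iR x < j}))
    · rcases hy with hy1 | hy2
      · obtain ⟨j, hj, hyj⟩ := Set.mem_iUnion₂.mp hy1
        rw [hiRu y j hyj]
        exact le_of_lt (hj.trans_le hxi)
      · obtain ⟨q, hq, rfl⟩ := hy2
        rw [hiRu (t q) q (hCr q).2, hterm q rfl]
    · have hadj' : (G.induce (((⋃ j < iR x, Cr j) ∪ (t '' {j | iR x < j}))ᶜ : Set V)).Adj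
        ⟨x, hxS⟩ ⟨y, hy⟩ := hadj
      have hysupp : (⟨y, hy⟩ : _) ∈ c.supp := by
        rw [SimpleGraph.ConnectedComponent.mem_supp_iff] at hxsupp ⊢
        rw [← hxsupp]
        exact SimpleGraph.ConnectedComponent.sound hadj'.symm.reachable
      have hyCr : y ∈ Cr (iR x) := by rw [hc]; exact ⟨_, hysupp, rfl⟩
      rw [hiRu y (iR x) hyCr]
      exact hxi
  -- membership along walks in G − M2 stays in the same C2 block
  have hC2closed : ∀ (x y : V) (i : Fin k), (G.deleteEdges M2).Adj x y →
      x ∈ C2 i → y ∈ C2 i := by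
    intro x y i h hx
    rw [SimpleGraph.deleteEdges_adj] at h
    obtain ⟨hadj, hnot⟩ := h
    have hex : ∃ j, x ∈ C2 j ∧ y ∈ C2 j := by
      by_contra hcon
      push_neg at hcon
      exact hnot ⟨x, y, hadj, rfl, fun j hj => hcon j hj.1 hj.2⟩
    obtain ⟨j, hxj, hyj⟩ := hex
    rwa [hUC2 x j i hxj hx] at hyj
  have hC2closedW : ∀ (a b : V), (G.deleteEdges M2).Walk a b → ∀ i, a ∈ C2 i → b ∈ C2 i := by
    intro a b w
    induction w with
    | nil => exact fun i h => h
    | @cons u z w' h q ih => exact fun i ha => ih i (hC2closed u z i h ha)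
  have hM2sub : M2 ⊆ G.edgeSet := by
    rintro e ⟨a, b, hadj, rfl, -⟩
    exact hadj
  -- M2 is a multiway cut
  have hM2cut : IsEdgeMultiwayCut G (Set.range t) M2 := by
    refine ⟨hM2sub, ?_⟩
    rintro _ ⟨q, rfl⟩ _ ⟨r, rfl⟩ hne' ⟨w⟩
    have h1 : t r ∈ C2 q := hC2closedW (t q) (t r) w q (hti2 q)
    exact hne' (by rw [htC2 r q h1])
  -- connectivity of C2-blocks through any N ⊆ M2
  have hTrans : ∀ (N : Set (Sym2 V)), N ⊆ M2 → ∀ (i' j : Fin k), C j ⊆ C2 i' →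
      ∀ u ∈ C j, ∀ v ∈ C j, (G.deleteEdges N).Reachable u v := by
    intro N hN i' j hsub u hu v hv
    obtain ⟨w⟩ := hCreach j u hu v hv
    have claim : ∀ a b : V, (G.deleteEdges M).Walk a b → a ∈ C j →
        (G.deleteEdges N).Reachable a b := by
      intro a b w'
      induction w' with
      | nil => exact fun _ => SimpleGraph.Reachable.refl _
      | @cons u' z w'' h q ih =>
        intro ha
        have hz : z ∈ C j := hCclose j u' ha z h.reachable
        have hGadj : G.Adj u' z := (SimpleGraph.deleteEdges_adj.mp h).1
        have hedge : (G.deleteEdges N).Adj u' z :=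
          SimpleGraph.deleteEdges_adj.mpr
            ⟨hGadj, fun hn => hIntra2 u' z i' (hsub ha) (hsub hz) (hN hn)⟩
        exact hedge.reachable.trans (ih hz)
    exact claim u v w hu
  -- connectivity inside C₀
  have hC₀C2 : C₀ ⊆ C2 s := le_of_eq hC2s.symm
  have hC₀mem : ∀ (x : {a // a ∈ C s \ {p}}), x.val ∈ C₀ → x ∈ c₀.supp := by
    intro x hx
    rw [hc₀] at hx
    obtain ⟨y, hy, hyx⟩ := hx
    rwa [← Subtype.val_injective hyx]
  have hC₀reach : ∀ (N : Set (Sym2 V)), N ⊆ M2 → ∀ u ∈ C₀, ∀ v ∈ C₀,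
      (G.deleteEdges N).Reachable u v := by
    intro N hN u hu v hv
    have hu' := hu; have hv' := hv
    rw [hc₀] at hu' hv'
    obtain ⟨⟨u0, hu0⟩, husupp, rfl⟩ := hu'
    obtain ⟨⟨v0, hv0⟩, hvsupp, rfl⟩ := hv'
    rw [SimpleGraph.ConnectedComponent.mem_supp_iff] at husupp hvsupp
    obtain ⟨w⟩ := SimpleGraph.ConnectedComponent.exact (husupp.trans hvsupp.symm)
    have claim : ∀ (a b : {x // x ∈ C s \ {p}}),
        (G.induce (C s \ {p} : Set V)).Walk a b → a.val ∈ C₀ →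
        (G.deleteEdges N).Reachable a.val b.val := by
      intro a b w'
      induction w' with
      | nil => exact fun _ => SimpleGraph.Reachable.refl _
      | @cons a' z w'' h q ih =>
        intro ha
        have hz : z.val ∈ C₀ := by
          rw [hc₀]
          refine ⟨z, ?_, rfl⟩
          rw [SimpleGraph.ConnectedComponent.mem_supp_iff]
          rw [← (SimpleGraph.ConnectedComponent.mem_supp_iff _ _).mp (hC₀mem a' ha)]
          exact SimpleGraph.ConnectedComponent.sound h.symm.reachable
        have hGadj : G.Adj a'.val z.val := h
        have hedge : (G.deleteEdges N).Adj a'.val z.val :=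
          SimpleGraph.deleteEdges_adj.mpr
            ⟨hGadj, fun hn => hIntra2 _ _ s (hC₀C2 ha) (hC₀C2 hz) (hN hn)⟩
        exact hedge.reachable.trans (ih hz)
    exact claim _ _ w hu
  -- the pivot p and its neighbor
  obtain ⟨u₀, hu₀, hpu₀⟩ := hpN
  have hpC2 : p ∈ C2 li := by rw [hC2li]; exact Or.inr ⟨hps, hpC₀⟩
  have hu₀C2 : u₀ ∈ C2 li := by rw [hC2li]; exact Or.inl hu₀
  have hCsC2 : ∀ x, x ∈ C s → x ∉ C₀ → x ∈ C2 li := by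
    intro x h1 h2; rw [hC2li]; exact Or.inr ⟨h1, h2⟩
  -- vertices of C s \ {p} can either reach p safely or lie in C₀
  have claimD : ∀ (N : Set (Sym2 V)), N ⊆ M2 → ∀ x, x ∈ C s → x ≠ p →
      (G.deleteEdges N).Reachable x p ∨ x ∈ C₀ := by
    intro N hN x hx hxp
    obtain ⟨w⟩ := hCreach s x hx p hps
    have claim : ∀ (a b : V), (G.deleteEdges M).Walk a b → b = p → a ∈ C s → a ≠ p →
        (G.deleteEdges N).Reachable a p ∨ a ∈ C₀ := by
      intro a b w'
      induction w' with
      | nil => exact fun hb ha hap => absurd hb hap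
      | @cons a' z w'' h q ih =>
        intro hb ha hap
        have hzCs : z ∈ C s := hCclose s a' ha z h.reachable
        have hGadj : G.Adj a' z := (SimpleGraph.deleteEdges_adj.mp h).1
        by_cases haC₀ : a' ∈ C₀
        · exact Or.inr haC₀
        by_cases hzp : z = p
        · subst hzp
          refine Or.inl ?_
          exact (SimpleGraph.deleteEdges_adj.mpr
            ⟨hGadj, fun hn => hIntra2 _ _ li (hCsC2 a' ha haC₀) hpC2 (hN hn)⟩).reachable
        by_cases hzC₀ : z ∈ C₀
        · -- then a' ∈ C₀ too, contradiction with haC₀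
          exfalso
          apply haC₀
          rw [hc₀]
          refine ⟨⟨a', ha, hap⟩, ?_, rfl⟩
          rw [SimpleGraph.ConnectedComponent.mem_supp_iff]
          rw [← (SimpleGraph.ConnectedComponent.mem_supp_iff _ _).mp
            (hC₀mem ⟨z, hzCs, hzp⟩ hzC₀)]
          have hadjI : (G.induce (C s \ {p} : Set V)).Adj ⟨a', ha, hap⟩ ⟨z, hzCs, hzp⟩ := hGadj
          exact SimpleGraph.ConnectedComponent.sound hadjI.reachable
        · rcases ih hb hzCs hzp with hre | hzC₀'
          · refine Or.inl ?_
            refine ((SimpleGraph.deleteEdges_adj.mpr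
              ⟨hGadj, fun hn => hIntra2 _ _ li (hCsC2 a' ha haC₀) (hCsC2 z hzCs hzC₀)
                (hN hn)⟩).reachable).trans hre
          · exact absurd hzC₀' hzC₀
    exact claim x p w rfl hx hxp
  -- full connectivity of C2 blocks under any N ⊆ M2
  have hC2reach : ∀ (N : Set (Sym2 V)), N ⊆ M2 → ∀ (i : Fin k), ∀ v ∈ C2 i,
      (G.deleteEdges N).Reachable (t i) v := by
    intro N hN i v hv
    have hedgePU : (G.deleteEdges N).Adj u₀ p :=
      SimpleGraph.deleteEdges_adj.mpr
        ⟨hpu₀.symm, fun hn => hIntra2 _ _ li hu₀C2 hpC2 (hN hn)⟩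
    have hCliC2 : C li ⊆ C2 li := by rw [hC2li]; exact Set.subset_union_left
    have htop : (G.deleteEdges N).Reachable (t li) p :=
      (hTrans N hN li li hCliC2 (t li) (hC li).2 u₀ hu₀).trans hedgePU.reachable
    rcases hmem2 v i hv with ⟨he, hv'⟩ | ⟨he, hv'⟩ | ⟨h1, h2, hv'⟩
    · rw [he]
      rcases hv' with h | ⟨hvs, hvC₀⟩
      · exact hTrans N hN li li hCliC2 (t li) (hC li).2 v h
      · by_cases hvp : v = p
        · rw [hvp]; exact htop
        · rcases claimD N hN v hvs hvp with hre | hvC₀'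
          · exact htop.trans hre.symm
          · exact absurd hvC₀' hvC₀
    · rw [he]
      exact hC₀reach N hN (t s) htsC₀ v hv'
    · exact hTrans N hN i i (le_of_eq (hC2o i h1 h2).symm) (t i) (hC i).2 v hv'
  -- minimality of M2
  have hM2min : ∀ M' ⊂ M2, ¬ IsEdgeMultiwayCut G (Set.range t) M' := by
    intro M' hss hcut
    obtain ⟨e, heM2, heM'⟩ := Set.exists_of_ssubset hss
    obtain ⟨a, b, hadj, rfl, hall⟩ := heM2
    have hab : iP a ≠ iP b := fun h => hall (iP a) ⟨hiP a, h ▸ hiP b⟩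
    refine hcut.2 (t (iP a)) ⟨_, rfl⟩ (t (iP b)) ⟨_, rfl⟩ (fun h => hab (ht h)) ?_
    have h1 := hC2reach M' hss.subset (iP a) a (hiP a)
    have h2 := hC2reach M' hss.subset (iP b) b (hiP b)
    have hmid : (G.deleteEdges M').Adj a b := SimpleGraph.deleteEdges_adj.mpr ⟨hadj, heM'⟩
    exact h1.trans (hmid.reachable.trans h2.symm)
  -- root lemma for C2
  have hRleC2 : ∀ (i : Fin k), ∀ v ∈ C2 i, iR v ≤ i := by
    intro i v hv
    obtain ⟨w⟩ := hC2reach M2 subset_rfl i v hv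
    have claim : ∀ a b : V, (G.deleteEdges M2).Walk a b → a ∈ C2 i → iR a ≤ i → iR b ≤ i := by
      intro a b w'
      induction w' with
      | nil => exact fun _ h => h
      | @cons u z w'' h q ih =>
        intro ha hra
        have hz : z ∈ C2 i := hC2closed u z i h ha
        have hGadj : G.Adj u z := (SimpleGraph.deleteEdges_adj.mp h).1
        exact ih hz (hStep u z i hGadj hra (fun q' hq' => htC2 q' i (hq' ▸ hz)))
    exact claim (t i) v w (hti2 i) (le_of_eq (hiRu (t i) i (hCr i).2))
  -- pointwise comparison iP ≤ iM
  have hPle : ∀ v, (iP v : ℕ) ≤ (iM v : ℕ) := by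
    intro v
    rcases hmem2 v (iP v) (hiP v) with ⟨he, hv'⟩ | ⟨he, hv'⟩ | ⟨h1, h2, hv'⟩
    · rcases hv' with h | ⟨hvs, hvC₀⟩
      · rw [he, hiMu v li h]
      · rw [he, hiMu v s hvs]; exact le_of_lt hls
    · rw [he, hiMu v s (hC₀sub hv').1]
    · rw [hiMu v (iP v) hv']
  refine ⟨⟨hM2cut, hM2min⟩, ?_⟩
  apply Finset.sum_lt_sum
  · intro v _
    exact Nat.sub_le_sub_right (hPle v) _
  · refine ⟨p, Finset.mem_univ p, ?_⟩
    have hp1 : iM p = s := hiMu p s hps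
    have hp2 : iP p = li := hiPu p li hpC2
    have hp3 : (iR p : ℕ) ≤ (li : ℕ) := hRleC2 li p hpC2
    have hp4 : (li : ℕ) < (s : ℕ) := hls
    rw [hp1, hp2]
    omega
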